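/- Let K be a field and V a finite-dimensional K-vector space. Every left ideal I of the associative algebra End_K(V) — that is, every additive subgroup I with g ∘ f ∈ I for all g ∈ End_K(V) and f ∈ I — is of the form I = I_e = { f ∈ End_K(V) : e ⊆ ker f } for some subspace e ⊆ V. In particular, every left ideal of End_K(V) is principal, i.e. of the form End_K(V) ∘ g for a single element g. -/

import Mathlib

open LinearMap

/-- Over a field, if `ker f ≤ ker h` then `h` factors through `f`. -/
lemma factor_thru {K M N P : Type*} [Field K] [AddCommGroup M] [Module K M]
    [AddCommGroup N] [Module K N] [AddCommGroup P] [Module K P]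
    (f : M →ₗ[K] N) (h : M →ₗ[K] P) (hle : ker f ≤ ker h) :
    ∃ x : N →ₗ[K] P, h = x.comp f := by
  set fbar : (M ⧸ ker f) →ₗ[K] N := (ker f).liftQ f le_rfl with hfbar
  have hinj : ker fbar = ⊥ := Submodule.ker_liftQ_eq_bot _ _ _ le_rfl
  obtain ⟨l, hl⟩ := fbar.exists_leftInverse_of_injective hinj
  refine ⟨((ker f).liftQ h hle).comp l, ?_⟩
  ext v
  have : l (fbar ((ker f).mkQ v)) = (ker f).mkQ v := by
    have := congrArg (fun g => g ((ker f).mkQ v)) hl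
    simpa using this
  simp only [comp_apply]
  have hfv : fbar ((ker f).mkQ v) = f v := by simp [hfbar]
  rw [← hfv, this]
  simp

/-- A projection-like endomorphism with kernel exactly `W`. -/
lemma exists_ker_eq {K V : Type*} [Field K] [AddCommGroup V] [Module K V]
    (W : Submodule K V) : ∃ p : Module.End K V, ker p = W := by
  obtain ⟨q, hq⟩ := W.exists_isCompl
  refine ⟨q.subtype.comp (q.projectionOnto W hq.symm), ?_⟩
  rw [ker_comp, Submodule.ker_subtype, Submodule.comap_bot, Submodule.linearProjOfIsCompl_ker]

theorem left_ideal_of_endomorphism_algebra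
    {K V : Type*} [Field K] [AddCommGroup V] [Module K V] [FiniteDimensional K V]
    (I : AddSubgroup (Module.End K V))
    (hI : ∀ g f : Module.End K V, f ∈ I → g * f ∈ I) :
    (∃ e : Submodule K V,
      (I : Set (Module.End K V)) = {f : Module.End K V | e ≤ LinearMap.ker f}) ∧
    (∃ g : Module.End K V,
      (I : Set (Module.End K V)) = {h : Module.End K V | ∃ x : Module.End K V, h = x * g}) := by
  classical
  -- Key closure lemma: if `ker a ⊓ ker b ≤ ker p`, `a ∈ I`, and every `q` with
  -- `ker b ≤ ker q` is in `I`, then `p ∈ I`.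
  have pair : ∀ (a b p : Module.End K V), ker a ⊓ ker b ≤ ker p → a ∈ I →
      (∀ q : Module.End K V, ker b ≤ ker q → q ∈ I) → p ∈ I := by
    intro a b p hker ha hb
    set A : V →ₗ[K] V × V := a.prod b with hA
    have hkA : ker A ≤ ker p := by
      rwa [hA, ker_prod]
    obtain ⟨X, hX⟩ := factor_thru A p hkA
    have hp : p = (X.comp (inl K V V)).comp a + (X.comp (inr K V V)).comp b := by
      ext v
      have : p v = X (A v) := by rw [hX]; rfl
      rw [this]
      simp [hA, prod_apply]
      rw [← map_add]
      congr 1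
      simp
    rw [hp]
    refine I.add_mem (hI _ a ha) (hb _ ?_)
    intro x hx
    simp [mem_ker, mem_ker.mp hx, Prod.mk_zero_zero]
  -- For a finset s of elements of I, anything killing ⨅ of their kernels is in I.
  have finlem : ∀ s : Finset (Module.End K V), (↑s : Set (Module.End K V)) ⊆ ↑I →
      ∀ p : Module.End K V, (⨅ f ∈ s, ker f) ≤ ker p → p ∈ I := by
    intro s
    induction s using Finset.induction_on with
    | empty =>
      intro _ p hp
      have : p = 0 := by
        ext v
        have : v ∈ ker p := hp (by simp)
        simpa using this
      rw [this]; exact I.zero_mem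
    | insert _ _ ha ih =>
      rename_i a s
      intro hs p hp
      have haI : a ∈ I := hs (by simp)
      have hsI : (↑s : Set (Module.End K V)) ⊆ ↑I := fun x hx => hs (by simp [hx])
      obtain ⟨b, hb⟩ := exists_ker_eq (K := K) (V := V) (⨅ f ∈ s, ker f)
      refine pair a b p ?_ haI ?_
      · rw [hb]
        refine le_trans (le_of_eq ?_) hp
        exact (Finset.iInf_insert a s fun f => ker f).symm
      · intro q hq
        exact ih hsI q (by rw [← hb]; exact hq)
  -- e = intersection of all kernels, attained on a finite set by Artinianity.
  set e : Submodule K V := ⨅ f : ↥I, ker (f : Module.End K V) with he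
  have hart : ∃ s : Finset (Module.End K V), (↑s : Set (Module.End K V)) ⊆ ↑I ∧
      (⨅ f ∈ s, ker f) = e := by
    -- take a minimal element of the set of finite intersections
    have hwf : WellFounded ((· < ·) : Submodule K V → Submodule K V → Prop) :=
      (IsWellFounded.wf : WellFounded ((· < ·) : Submodule K V → Submodule K V → Prop))
    set S : Set (Submodule K V) :=
      {W | ∃ s : Finset (Module.End K V), (↑s : Set (Module.End K V)) ⊆ ↑I ∧
        (⨅ f ∈ s, ker f) = W} with hS
    have hne : S.Nonempty := ⟨⊤, ∅, by simp, by simp⟩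
    obtain ⟨m, hmS, hmin⟩ := hwf.has_min S hne
    obtain ⟨s, hsI, hsm⟩ := hmS
    have hmle : ∀ f : Module.End K V, f ∈ I → m ≤ ker f := by
      intro f hf
      by_contra hcon
      have hlt : m ⊓ ker f < m := lt_of_le_of_ne inf_le_left (by
        intro heq
        exact hcon (le_trans (le_of_eq heq.symm) inf_le_right))
      refine hmin (m ⊓ ker f) ?_ hlt
      exact ⟨insert f s, by
        intro x hx
        rcases Finset.mem_insert.mp (by exact_mod_cast hx) with h | h
        · rw [h]; exact hf
        · exact hsI h, by rw [Finset.iInf_insert, hsm, inf_comm]⟩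
    have : m = e := by
      apply le_antisymm
      · exact le_iInf fun f => hmle f f.2
      · rw [← hsm]
        exact le_iInf fun f => le_iInf fun hf => iInf_le_of_le ⟨f, hsI hf⟩ le_rfl
    exact ⟨s, hsI, by rw [hsm, this]⟩
  obtain ⟨s, hsI, hse⟩ := hart
  have key : ∀ p : Module.End K V, e ≤ ker p → p ∈ I := by
    intro p hp
    exact finlem s hsI p (by rw [hse]; exact hp)
  have Ieq : (I : Set (Module.End K V)) = {f : Module.End K V | e ≤ ker f} := by
    ext f
    constructor
    · intro hf
      exact iInf_le (fun g : ↥I => ker (g : Module.End K V)) ⟨f, hf⟩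
    · intro hf
      exact key f hf
  constructor
  · exact ⟨e, Ieq⟩
  · obtain ⟨g, hg⟩ := exists_ker_eq (K := K) (V := V) e
    refine ⟨g, ?_⟩
    rw [Ieq]
    ext f
    constructor
    · intro hf
      obtain ⟨x, hx⟩ := factor_thru g f (by rw [hg]; exact hf)
      exact ⟨x, hx⟩
    · rintro ⟨x, rfl⟩
      rw [← hg]
      intro v hv
      simp [Module.End.mul_apply, mem_ker.mp hv]
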